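/- Let m ≥ 2 and let S be a LexOpt schedule of jobs with processing times p_1,…,p_n > 0 on m identical machines. Let f ≥ 1 be a real and k an integer with 0 ≤ k < m, and let p̂ satisfy 0 ≤ p̂_j ≤ p_j for every j (reductions only, with p̂_j = 0 modeling cancellation) such that the number of unstable jobs, i.e. jobs with p̂_j < p_j/f, is at most k. Then the schedule that keeps exactly the same job-to-machine assignment as S has makespan, measured with processing times p̂, at most 2f·(1 + ⌈k/(m−k)⌉)·C*_max(m, p̂). -/

import Mathlib

open Finset

/-- Completion time (load) of machine `i` under schedule `σ` and processing times `p`. -/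
noncomputable def mLoad {n m : ℕ} (p : Fin n → ℝ) (σ : Fin n → Fin m) (i : Fin m) : ℝ :=
  ∑ j ∈ Finset.univ.filter (fun j => σ j = i), p j

/-- Makespan of schedule `σ`: the maximum machine completion time. -/
noncomputable def makespan {n m : ℕ} (p : Fin n → ℝ) (σ : Fin n → Fin m) : ℝ :=
  ⨆ i, mLoad p σ i

/-- Minimum makespan of the jobs with processing times `p` on `m` machines. -/
noncomputable def optMakespan {n : ℕ} (m : ℕ) (p : Fin n → ℝ) : ℝ :=
  ⨅ σ : Fin n → Fin m, makespan p σ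

/-- The completion-time vector sorted in non-increasing order. -/
noncomputable def sortedDesc {m : ℕ} (C : Fin m → ℝ) : Fin m → ℝ :=
  fun i => C (Tuple.sort C i.rev)

/-- A schedule is LexOpt if its non-increasingly sorted completion-time vector is
lexicographically at most that of every other schedule. -/
def IsLexOpt {n m : ℕ} (p : Fin n → ℝ) (σ : Fin n → Fin m) : Prop :=
  ∀ σ' : Fin n → Fin m, toLex (sortedDesc (mLoad p σ)) ≤ toLex (sortedDesc (mLoad p σ'))

lemma sortedDesc_antitone {m : ℕ} (C : Fin m → ℝ) : Antitone (sortedDesc C) := by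
  intro i j hij
  exact Tuple.monotone_sort C (Fin.rev_le_rev.mpr hij)

noncomputable def descPerm {m : ℕ} (C : Fin m → ℝ) : Equiv.Perm (Fin m) :=
  (Fin.revPerm).trans (Tuple.sort C)

lemma sortedDesc_eq {m : ℕ} (C : Fin m → ℝ) : sortedDesc C = C ∘ (descPerm C) := rfl

lemma filter_comp_equiv_card {m : ℕ} (e : Equiv.Perm (Fin m)) (P : Fin m → Prop)
    [DecidablePred P] :
    (univ.filter fun x => P (e x)).card = (univ.filter P).card := by
  have h : (univ.filter fun x => P (e x)) = Finset.map e.symm.toEmbedding (univ.filter P) := by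
    ext x
    simp only [Finset.mem_map, Finset.mem_filter, Finset.mem_univ, true_and,
      Equiv.coe_toEmbedding]
    constructor
    · intro hx; exact ⟨e x, hx, e.symm_apply_apply x⟩
    · rintro ⟨y, hy, rfl⟩; simpa using hy
  rw [h, Finset.card_map]

lemma filter_comp_equiv_map {m : ℕ} (e : Equiv.Perm (Fin m)) (P : Fin m → Prop)
    [DecidablePred P] (g : Fin m → ℝ) :
    ((univ.filter fun x => P (e x)).val.map fun x => g (e x)) = (univ.filter P).val.map g := by
  have h : Finset.map e.toEmbedding (univ.filter fun x => P (e x)) = univ.filter P := by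
    ext x
    simp only [Finset.mem_map, Finset.mem_filter, Finset.mem_univ, true_and,
      Equiv.coe_toEmbedding]
    constructor
    · rintro ⟨y, hy, rfl⟩; exact hy
    · intro hx; exact ⟨e.symm x, by simpa using hx, e.apply_symm_apply x⟩
  have := congrArg (fun s => Multiset.map g s.val) h
  simpa [Finset.map_val, Multiset.map_map, Function.comp] using this

lemma lex_lt_of_replace {m : ℕ} (L L' : Fin m → ℝ) (i i' : Fin m)
    (ha : L' i < L i) (hb : L' i' < L i) (hb' : L i' < L i)
    (hoff : ∀ x, x ≠ i → x ≠ i' → L x = L' x) :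
    toLex (sortedDesc L') < toLex (sortedDesc L) := by
  classical
  set a := L i with ha_def
  have hu_anti := sortedDesc_antitone L'
  have hv_anti := sortedDesc_antitone L
  set u := sortedDesc L' with hu_def
  set v := sortedDesc L with hv_def
  set cu := Fintype.card {x // a ≤ u x} with hcu_def
  set cv := Fintype.card {x // a ≤ v x} with hcv_def
  have hu_iff : ∀ x : Fin m, ((x : ℕ) < cu ↔ a ≤ u x) := fun x =>
    by rw [hcu_def, Fintype.card_subtype]; exact Tuple.lt_card_ge_iff_apply_ge_of_antitone hu_anti
  have hv_iff : ∀ x : Fin m, ((x : ℕ) < cv ↔ a ≤ v x) := fun x =>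
    by rw [hcv_def, Fintype.card_subtype]; exact Tuple.lt_card_ge_iff_apply_ge_of_antitone hv_anti
  -- u = L' ∘ descPerm L' etc.
  have hu_card : cu = (univ.filter fun x => a ≤ L' x).card := by
    rw [hcu_def, Fintype.card_subtype]
    exact filter_comp_equiv_card (descPerm L') (fun x => a ≤ L' x)
  have hv_card : cv = (univ.filter fun x => a ≤ L x).card := by
    rw [hcv_def, Fintype.card_subtype]
    exact filter_comp_equiv_card (descPerm L) (fun x => a ≤ L x)
  -- key filter relation
  have hinotmem : i ∉ (univ.filter fun x => a ≤ L' x) := by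
    simp only [Finset.mem_filter, Finset.mem_univ, true_and, not_le]
    exact ha
  have hkey : (univ.filter fun x => a ≤ L x) = insert i (univ.filter fun x => a ≤ L' x) := by
    ext x
    simp only [Finset.mem_filter, Finset.mem_univ, true_and, Finset.mem_insert]
    by_cases hxi : x = i
    · subst hxi; simp [ha_def]
    · by_cases hxi' : x = i'
      · subst hxi'
        simp only [hxi, false_or]
        constructor
        · intro h; exact absurd (lt_of_le_of_lt h hb') (lt_irrefl _)
        · intro h; exact absurd (lt_of_le_of_lt h hb) (lt_irrefl _)
      · rw [hoff x hxi hxi']; tauto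
  have hcv_cu : cv = cu + 1 := by
    rw [hu_card, hv_card, hkey, Finset.card_insert_of_notMem hinotmem]
  have hcu_lt : cu < m := by
    have : cv ≤ m := by
      rw [hv_card]
      simpa using Finset.card_filter_le univ (fun x => a ≤ L x)
    omega
  set idx : Fin m := ⟨cu, hcu_lt⟩ with hidx_def
  have hvidx_ge : a ≤ v idx := (hv_iff idx).mp (by simp [hidx_def, hcv_cu])
  have huidx_lt : u idx < a := by
    have : ¬ ((idx : ℕ) < cu) := by simp [hidx_def]
    exact lt_of_not_ge fun h => this ((hu_iff idx).mpr h)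
  -- v idx = a
  have hvidx : v idx = a := by
    refine le_antisymm ?_ hvidx_ge
    set t0 := (descPerm L).symm i with ht0
    have hvt0 : v t0 = a := by
      rw [hv_def, sortedDesc_eq]
      simp [ht0, ha_def]
    have ht0lt : (t0 : ℕ) < cv := (hv_iff t0).mpr (le_of_eq hvt0.symm)
    have : t0 ≤ idx := by
      rw [Fin.le_def]
      simp only [hidx_def]
      omega
    calc v idx ≤ v t0 := hv_anti this
    _ = a := hvt0
  -- prefix multisets
  have hcu_le : cu ≤ m := hcu_lt.le
  set w1 : Fin cu → ℝ := u ∘ Fin.castLE hcu_le with hw1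
  set w2 : Fin cu → ℝ := v ∘ Fin.castLE hcu_le with hw2
  have hfiltcast : ∀ (c : ℕ) (hc : c ≤ m),
      Finset.map (Fin.castLEEmb hc) univ = univ.filter (fun x : Fin m => (x : ℕ) < c) := by
    intro c hc
    ext x
    rw [Finset.mem_map, Finset.mem_filter]
    constructor
    · rintro ⟨t, -, rfl⟩
      exact ⟨Finset.mem_univ _, t.isLt⟩
    · rintro ⟨-, hx⟩
      exact ⟨⟨x, hx⟩, Finset.mem_univ _, Fin.ext rfl⟩
  have hprefmul : ∀ (g : Fin m → ℝ),
      ((univ.filter (fun x : Fin m => (x : ℕ) < cu)).val.map g : Multiset ℝ)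
        = ↑(List.ofFn (g ∘ Fin.castLE hcu_le)) := by
    intro g
    rw [← hfiltcast cu hcu_le, Finset.map_val, Multiset.map_map]
    rw [← Fin.univ_val_map (g ∘ Fin.castLE hcu_le)]
    rfl
  -- compute Mu
  have hMu : ((univ.filter (fun x : Fin m => a ≤ u x)).val.map u : Multiset ℝ)
      = (univ.filter fun x => a ≤ L' x).val.map L' :=
    filter_comp_equiv_map (descPerm L') (fun x => a ≤ L' x) L'
  have hMv : ((univ.filter (fun x : Fin m => a ≤ v x)).val.map v : Multiset ℝ)
      = (univ.filter fun x => a ≤ L x).val.map L :=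
    filter_comp_equiv_map (descPerm L) (fun x => a ≤ L x) L
  -- filter (a ≤ u) = filter (< cu)
  have hfu : (univ.filter (fun x : Fin m => a ≤ u x)) = univ.filter (fun x : Fin m => (x : ℕ) < cu) := by
    ext x; simp only [Finset.mem_filter, Finset.mem_univ, true_and]
    exact (hu_iff x).symm
  have hfv : (univ.filter (fun x : Fin m => a ≤ v x)) = univ.filter (fun x : Fin m => (x : ℕ) < cv) := by
    ext x; simp only [Finset.mem_filter, Finset.mem_univ, true_and]
    exact (hv_iff x).symm
  have hfv' : (univ.filter (fun x : Fin m => (x : ℕ) < cv))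
      = insert idx (univ.filter (fun x : Fin m => (x : ℕ) < cu)) := by
    ext x
    simp only [Finset.mem_filter, Finset.mem_univ, true_and, Finset.mem_insert, Fin.ext_iff,
      hidx_def, hcv_cu]
    omega
  have hidxnot : idx ∉ (univ.filter (fun x : Fin m => (x : ℕ) < cu)) := by
    simp [hidx_def]
  -- L = L' on filter (a ≤ L')
  have hLL' : ((univ.filter fun x => a ≤ L' x).val.map L : Multiset ℝ)
      = (univ.filter fun x => a ≤ L' x).val.map L' := by
    apply Multiset.map_congr rfl
    intro x hx
    simp only [Finset.mem_val, Finset.mem_filter, Finset.mem_univ, true_and] at hx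
    refine hoff x ?_ ?_
    · rintro rfl; exact absurd hx (not_le.mpr ha)
    · rintro rfl; exact absurd hx (not_le.mpr hb)
  -- chain: list of w2 = list of w1 as multisets
  have hchain : ((List.ofFn w2 : List ℝ) : Multiset ℝ) = ((List.ofFn w1 : List ℝ) : Multiset ℝ) := by
    have h1 : (a ::ₘ ((univ.filter (fun x : Fin m => (x : ℕ) < cu)).val.map v) : Multiset ℝ)
        = a ::ₘ ((univ.filter (fun x : Fin m => (x : ℕ) < cu)).val.map u) := by
      calc a ::ₘ ((univ.filter (fun x : Fin m => (x : ℕ) < cu)).val.map v)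
          = (insert idx (univ.filter (fun x : Fin m => (x : ℕ) < cu))).val.map v := by
            rw [Finset.insert_val_of_notMem hidxnot, Multiset.map_cons, hvidx]
        _ = (univ.filter (fun x : Fin m => a ≤ v x)).val.map v := by rw [hfv, hfv']
        _ = (univ.filter fun x => a ≤ L x).val.map L := hMv
        _ = (insert i (univ.filter fun x => a ≤ L' x)).val.map L := by rw [hkey]
        _ = a ::ₘ ((univ.filter fun x => a ≤ L' x).val.map L) := by
            rw [Finset.insert_val_of_notMem hinotmem, Multiset.map_cons]
        _ = a ::ₘ ((univ.filter fun x => a ≤ L' x).val.map L') := by rw [hLL']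
        _ = a ::ₘ ((univ.filter (fun x : Fin m => a ≤ u x)).val.map u) := by rw [hMu]
        _ = a ::ₘ ((univ.filter (fun x : Fin m => (x : ℕ) < cu)).val.map u) := by rw [hfu]
    have h2 := (Multiset.cons_inj_right a).mp h1
    rw [hprefmul v, hprefmul u] at h2
    exact h2
  have hperm : List.Perm (List.ofFn w2) (List.ofFn w1) := Multiset.coe_eq_coe.mp hchain
  have hs1 : (List.ofFn w1).Pairwise (fun x y : ℝ => y ≤ x) := by
    rw [List.pairwise_ofFn]
    intro t t' htt'
    exact hu_anti (by exact_mod_cast le_of_lt htt' : Fin.castLE hcu_le t ≤ Fin.castLE hcu_le t')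
  have hs2 : (List.ofFn w2).Pairwise (fun x y : ℝ => y ≤ x) := by
    rw [List.pairwise_ofFn]
    intro t t' htt'
    exact hv_anti (by exact_mod_cast le_of_lt htt' : Fin.castLE hcu_le t ≤ Fin.castLE hcu_le t')
  haveI : IsAntisymm ℝ (fun x y : ℝ => y ≤ x) := ⟨fun _ _ h1 h2 => le_antisymm h2 h1⟩
  have heqlist : List.ofFn w2 = List.ofFn w1 := List.Perm.eq_of_pairwise' hs2 hs1 hperm
  have heqfn : w2 = w1 := List.ofFn_injective heqlist
  -- prefix equality
  have hprefix : ∀ j : Fin m, j < idx → u j = v j := by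
    intro j hj
    have hjv : (j : ℕ) < cu := by
      simpa [hidx_def, Fin.lt_def] using hj
    have : Fin.castLE hcu_le ⟨(j : ℕ), hjv⟩ = j := by
      apply Fin.ext; rfl
    have h1 : w1 ⟨(j : ℕ), hjv⟩ = u j := by rw [hw1]; simp [this]
    have h2 : w2 ⟨(j : ℕ), hjv⟩ = v j := by rw [hw2]; simp [this]
    rw [← h1, ← h2, heqfn]
  exact ⟨idx, fun j hj => hprefix j hj, lt_of_lt_of_le huidx_lt hvidx_ge⟩

lemma load_le {n m : ℕ} (p : Fin n → ℝ) (hp : ∀ j, 0 < p j) (σ : Fin n → Fin m)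
    (hσ : IsLexOpt p σ) (j0 : Fin n) (i' : Fin m) :
    mLoad p σ (σ j0) ≤ mLoad p σ i' + p j0 := by
  classical
  by_contra hcon
  push_neg at hcon
  set i := σ j0 with hi_def
  have hne : i' ≠ i := by
    rintro rfl
    have := hp j0
    linarith
  set σ' := Function.update σ j0 i' with hσ'def
  have hfi : univ.filter (fun j => σ' j = i) = (univ.filter (fun j => σ j = i)).erase j0 := by
    ext x
    simp only [Finset.mem_filter, Finset.mem_univ, true_and, Finset.mem_erase]
    by_cases hx : x = j0
    · subst hx
      simp [hσ'def, Function.update_self, hne]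
    · simp [hσ'def, Function.update_of_ne hx, hx]
  have hfi' : univ.filter (fun j => σ' j = i') = insert j0 (univ.filter (fun j => σ j = i')) := by
    ext x
    simp only [Finset.mem_filter, Finset.mem_univ, true_and, Finset.mem_insert]
    by_cases hx : x = j0
    · subst hx
      simp [hσ'def, Function.update_self]
    · simp [hσ'def, Function.update_of_ne hx, hx]
  have hj0i : j0 ∈ univ.filter (fun j => σ j = i) := by simp [hi_def]
  have hj0i' : j0 ∉ univ.filter (fun j => σ j = i') := by
    simp only [Finset.mem_filter, Finset.mem_univ, true_and]
    exact fun h => hne (h.symm.trans hi_def.symm)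
  have hLi : mLoad p σ' i = mLoad p σ i - p j0 := by
    rw [mLoad, mLoad, hfi, Finset.sum_erase_eq_sub hj0i]
  have hLi' : mLoad p σ' i' = mLoad p σ i' + p j0 := by
    rw [mLoad, mLoad, hfi', Finset.sum_insert hj0i']
    ring
  have hoff : ∀ x, x ≠ i → x ≠ i' → mLoad p σ x = mLoad p σ' x := by
    intro x hxi hxi'
    rw [mLoad, mLoad]
    congr 1
    ext y
    simp only [Finset.mem_filter, Finset.mem_univ, true_and]
    by_cases hy : y = j0
    · subst hy
      constructor
      · intro h
        exact absurd (h.symm.trans hi_def.symm) hxi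
      · intro h
        rw [hσ'def, Function.update_self] at h
        exact absurd h.symm hxi'
    · rw [hσ'def, Function.update_of_ne hy]
  have hlt := lex_lt_of_replace (mLoad p σ) (mLoad p σ') i i'
    (by rw [hLi]; linarith [hp j0])
    (by rw [hLi']; exact hcon)
    (by linarith [hp j0])
    hoff
  exact lt_irrefl _ (lt_of_lt_of_le hlt (hσ σ'))

/-- Type-1 (reductions/cancellations only) recovery guarantee: keeping a LexOpt
assignment after reductions with at most `k < m` unstable jobs (reduced by a factor
exceeding `f`) yields makespan at most `2f·(1 + ⌈k/(m-k)⌉)·C*_max(m, p̂)`. -/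
theorem stmt12 (n m : ℕ) (hm : 2 ≤ m) (p : Fin n → ℝ) (hp : ∀ j, 0 < p j)
    (σ : Fin n → Fin m) (hσ : IsLexOpt p σ)
    (f : ℝ) (hf : 1 ≤ f) (k : ℕ) (hk : k < m)
    (phat : Fin n → ℝ) (h0 : ∀ j, 0 ≤ phat j) (h1 : ∀ j, phat j ≤ p j)
    (hunstable : (Finset.univ.filter (fun j => phat j < p j / f)).card ≤ k) :
    makespan phat σ ≤
      2 * f * (1 + (⌈(k : ℝ) / ((m : ℝ) - k)⌉₊ : ℝ)) * optMakespan m phat := by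
  classical
  haveI : NeZero m := ⟨by omega⟩
  have hmpos : (0:ℝ) < m := by positivity
  have hfpos : (0:ℝ) < f := lt_of_lt_of_le one_pos hf
  set q : ℝ := (⌈(k : ℝ) / ((m : ℝ) - k)⌉₊ : ℝ) with hq_def
  have hq0 : 0 ≤ q := by positivity
  have hmk : (0:ℝ) < (m:ℝ) - k := by
    have : (k:ℝ) < m := by exact_mod_cast hk
    linarith
  have hkq : (k:ℝ) ≤ q * ((m:ℝ) - k) := by
    have h := Nat.le_ceil ((k : ℝ) / ((m : ℝ) - k))
    calc (k:ℝ) = (k:ℝ) / ((m:ℝ) - k) * ((m:ℝ) - k) := by field_simp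
    _ ≤ q * ((m:ℝ) - k) := by
        apply mul_le_mul_of_nonneg_right h (le_of_lt hmk)
  -- basic facts about loads and OPT
  have hload_nonneg : ∀ (σ' : Fin n → Fin m) (i : Fin m), 0 ≤ mLoad phat σ' i := by
    intro σ' i
    exact Finset.sum_nonneg fun j _ => h0 j
  have hload_le_mk : ∀ (σ' : Fin n → Fin m) (i : Fin m), mLoad phat σ' i ≤ makespan phat σ' := by
    intro σ' i
    exact le_ciSup (Set.Finite.bddAbove (Set.finite_range _)) i
  have hmk_nonneg : ∀ σ' : Fin n → Fin m, 0 ≤ makespan phat σ' := by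
    intro σ'
    exact le_trans (hload_nonneg σ' ⟨0, by omega⟩) (hload_le_mk σ' ⟨0, by omega⟩)
  set OPT := optMakespan m phat with hOPT_def
  have hOPT0 : 0 ≤ OPT := le_ciInf hmk_nonneg
  have hOPTj : ∀ j, phat j ≤ OPT := by
    intro j
    apply le_ciInf
    intro σ'
    refine le_trans ?_ (hload_le_mk σ' (σ' j))
    refine Finset.single_le_sum (fun x _ => h0 x) ?_
    simp
  have hsum : ∑ j, phat j ≤ (m:ℝ) * OPT := by
    have hdiv : ∀ σ' : Fin n → Fin m, (∑ j, phat j) / m ≤ makespan phat σ' := by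
      intro σ'
      rw [div_le_iff₀ hmpos]
      have : ∑ j, phat j = ∑ i, mLoad phat σ' i := by
        rw [← Finset.sum_fiberwise univ σ' phat]
        rfl
      rw [this]
      calc ∑ i, mLoad phat σ' i ≤ ∑ _i : Fin m, makespan phat σ' :=
            Finset.sum_le_sum fun i _ => hload_le_mk σ' i
      _ = makespan phat σ' * m := by
          simp [mul_comm]
    have h := le_ciInf hdiv
    have h' : (∑ j, phat j) / m ≤ OPT := h
    rw [div_le_iff₀ hmpos] at h'
    linarith [h']
  -- stable machines
  set T : Finset (Fin m) := univ.filter (fun i' : Fin m => ∀ j, σ j = i' → p j / f ≤ phat j)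
    with hT_def
  have hTcard : m - k ≤ T.card := by
    have hsub : univ \ T ⊆ (univ.filter (fun j => phat j < p j / f)).image σ := by
      intro x hx
      simp only [hT_def, Finset.mem_sdiff, Finset.mem_filter, Finset.mem_univ, true_and,
        not_forall] at hx
      obtain ⟨j, hj1, hj2⟩ := hx
      simp only [Finset.mem_image, Finset.mem_filter, Finset.mem_univ, true_and]
      exact ⟨j, lt_of_not_ge hj2, hj1⟩
    have h2 : (univ \ T).card ≤ k :=
      le_trans (Finset.card_le_card hsub) (le_trans (Finset.card_image_le) hunstable)
    have h3 : (univ \ T).card = m - T.card := by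
      rw [Finset.card_sdiff_of_subset (Finset.subset_univ T), Finset.card_univ, Fintype.card_fin]
    have h4 : T.card ≤ m := by
      calc T.card ≤ (univ : Finset (Fin m)).card := Finset.card_le_card (Finset.subset_univ T)
      _ = m := by simp
    omega
  have hTne : T.Nonempty := by
    rw [← Finset.card_pos]
    omega
  obtain ⟨i0, hi0T, hi0min⟩ := Finset.exists_min_image T (mLoad phat σ) hTne
  have hi0stable : ∀ j, σ j = i0 → p j / f ≤ phat j := by
    have := hi0T
    simp only [hT_def, Finset.mem_filter, Finset.mem_univ, true_and] at this
    exact this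
  -- (4) p-load of i0 ≤ f * phat-load of i0
  have h4 : mLoad p σ i0 ≤ f * mLoad phat σ i0 := by
    rw [mLoad, mLoad, Finset.mul_sum]
    apply Finset.sum_le_sum
    intro j hj
    simp only [Finset.mem_filter, Finset.mem_univ, true_and] at hj
    have := hi0stable j hj
    rw [div_le_iff₀ hfpos] at this
    linarith [this]
  -- (5) phat-load of i0 ≤ (1+q) * OPT
  have h5 : mLoad phat σ i0 ≤ (1 + q) * OPT := by
    have hcard_le : ((m:ℝ) - k) ≤ (T.card : ℝ) := by
      have : ((m - k : ℕ) : ℝ) ≤ (T.card : ℝ) := by exact_mod_cast hTcard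
      rwa [Nat.cast_sub hk.le] at this
    have hsumT : (T.card : ℝ) * mLoad phat σ i0 ≤ ∑ i ∈ T, mLoad phat σ i := by
      calc (T.card : ℝ) * mLoad phat σ i0 = ∑ _i ∈ T, mLoad phat σ i0 := by
            rw [Finset.sum_const, nsmul_eq_mul]
      _ ≤ ∑ i ∈ T, mLoad phat σ i := Finset.sum_le_sum fun i hi => hi0min i hi
    have hsumT2 : ∑ i ∈ T, mLoad phat σ i ≤ ∑ i, mLoad phat σ i :=
      Finset.sum_le_sum_of_subset_of_nonneg (Finset.subset_univ T)
        (fun i _ _ => hload_nonneg σ i)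
    have hsumall : ∑ i, mLoad phat σ i = ∑ j, phat j := by
      rw [← Finset.sum_fiberwise univ σ phat]
      rfl
    have hkey : mLoad phat σ i0 * ((m:ℝ) - k) ≤ (m:ℝ) * OPT := by
      calc mLoad phat σ i0 * ((m:ℝ) - k) ≤ mLoad phat σ i0 * (T.card : ℝ) :=
            mul_le_mul_of_nonneg_left hcard_le (hload_nonneg σ i0)
      _ = (T.card : ℝ) * mLoad phat σ i0 := mul_comm _ _
      _ ≤ ∑ i ∈ T, mLoad phat σ i := hsumT
      _ ≤ ∑ j, phat j := by rw [← hsumall]; exact hsumT2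
      _ ≤ (m:ℝ) * OPT := hsum
    nlinarith [hload_nonneg σ i0, hOPT0]
  -- bound each machine load
  have hRHS0 : 0 ≤ 2 * f * (1 + q) * OPT := by positivity
  rw [makespan]
  apply ciSup_le
  intro i
  by_cases hemp : (univ.filter (fun j => σ j = i)).Nonempty
  · obtain ⟨jstar, hjs, hjsmin⟩ := Finset.exists_min_image _ p hemp
    simp only [Finset.mem_filter, Finset.mem_univ, true_and] at hjs
    -- (1)
    have hstep1 : mLoad phat σ i ≤ mLoad p σ i - p jstar + phat jstar := by
      rw [mLoad, mLoad]
      have hjs' : jstar ∈ univ.filter (fun j => σ j = i) := by simp [hjs]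
      rw [← Finset.sum_erase_add _ _ hjs', ← Finset.sum_erase_add _ p hjs']
      have : ∑ j ∈ (univ.filter (fun j => σ j = i)).erase jstar, phat j
          ≤ ∑ j ∈ (univ.filter (fun j => σ j = i)).erase jstar, p j :=
        Finset.sum_le_sum fun j _ => h1 j
      linarith
    -- (3)
    have hstep3 : mLoad p σ i ≤ mLoad p σ i0 + p jstar := by
      have := load_le p hp σ hσ jstar i0
      rwa [hjs] at this
    have hjsOPT : phat jstar ≤ OPT := hOPTj jstar
    -- combine
    have hxle : mLoad phat σ i ≤ f * mLoad phat σ i0 + OPT := by linarith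
    have h6 : f * mLoad phat σ i0 ≤ f * ((1 + q) * OPT) :=
      mul_le_mul_of_nonneg_left h5 (le_of_lt hfpos)
    have h7 : OPT ≤ f * ((1 + q) * OPT) := by nlinarith [mul_nonneg (mul_nonneg hfpos.le hq0) hOPT0, mul_le_mul_of_nonneg_right hf hOPT0]
    calc mLoad phat σ i ≤ f * ((1 + q) * OPT) + f * ((1 + q) * OPT) := by linarith
    _ = 2 * f * (1 + q) * OPT := by ring
  · have : mLoad phat σ i = 0 := by
      rw [mLoad, Finset.not_nonempty_iff_eq_empty.mp hemp, Finset.sum_empty]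
    rw [this]
    exact hRHS0
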